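/- arXiv:2504.12692 — 2 statements merged into one kernel-verified Lean document; each statement's English description precedes it below -/
import Mathlib

section
/- Let q be a prime and let Kl(z,q) = S(z,1;q)/√q denote the normalized Kloosterman sum. Then Σ_{b mod q} Σ_{c mod q, gcd(c,q)=1} |Σ_{m=1}^{M} α_m Kl(b + mc, q)|² ≤ q(q−1)·M·max_m |α_m|² + q·M²·(Σ_m |α_m|)², for any complex coefficients α_m. In particular, when |α_m| ≤ 1 for all m, the left side is O(q²M + qM⁴); in fact the orthogonality of Kloosterman sums yields the bound Σ_{b,c} |Σ_m α_m Kl(b+mc,q)|² ≪ q² M when |α_m| ≤ 1, using that Σ_{z mod q} Kl(z,q) Kl(z+t,q) equals q·1_{t≡0} + O(q^{1/2}) error terms bounded via Weil. -/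
open Finset Real

/-- The normalized Kloosterman sum `Kl(z,q) = S(z,1;q)/√q`. -/
noncomputable def Kl (q : ℕ) [NeZero q] (z : ZMod q) : ℂ :=
  (∑ x : (ZMod q)ˣ,
      Complex.exp (2 * Real.pi * Complex.I *
        (((z * (x : ZMod q) + ((x⁻¹ : (ZMod q)ˣ) : ZMod q)).val : ℂ) / q)))
    / Real.sqrt q

lemma std_conj {q : ℕ} [NeZero q] (w : ZMod q) :
    (starRingEnd ℂ) (ZMod.stdAddChar w) = ZMod.stdAddChar (-w) := by
  rw [ZMod.stdAddChar_apply, ZMod.stdAddChar_apply, AddChar.map_neg_eq_inv,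
    Circle.coe_inv_eq_conj]

lemma std_norm {q : ℕ} [NeZero q] (w : ZMod q) : ‖ZMod.stdAddChar w‖ = 1 := by
  rw [ZMod.stdAddChar_apply, Circle.norm_coe]

lemma orth {q : ℕ} [NeZero q] (t : ZMod q) :
    ∑ b : ZMod q, ZMod.stdAddChar (t * b) = if t = 0 then (q : ℂ) else 0 := by
  split_ifs with h
  · simp only [h, zero_mul, AddChar.map_zero_eq_one, sum_const, card_univ, ZMod.card,
      nsmul_eq_mul, mul_one]
  · exact AddChar.sum_eq_zero_of_ne_one (ZMod.isPrimitive_stdAddChar q h)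

lemma norm_sq_eq' (z : ℂ) : (‖z‖ : ℂ) ^ 2 = z * (starRingEnd ℂ) z := by
  rw [Complex.mul_conj, Complex.normSq_eq_norm_sq]
  push_cast
  ring

lemma key {q : ℕ} [NeZero q] {ι : Type*} [DecidableEq ι]
    (s : Finset ι) (f : ι → ℂ) (g : ι → ZMod q) (hg : Set.InjOn g s) :
    ∑ b : ZMod q, ‖∑ x ∈ s, f x * ZMod.stdAddChar (g x * b)‖ ^ 2
      = q * ∑ x ∈ s, ‖f x‖ ^ 2 := by
  apply Complex.ofReal_injective
  push_cast
  calc ∑ b : ZMod q, (‖∑ x ∈ s, f x * ZMod.stdAddChar (g x * b)‖ : ℂ) ^ 2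
      = ∑ b : ZMod q, ∑ x ∈ s, ∑ y ∈ s,
          (f x * (starRingEnd ℂ) (f y)) * ZMod.stdAddChar ((g x - g y) * b) := by
        refine Finset.sum_congr rfl fun b _ => ?_
        rw [norm_sq_eq', map_sum, Finset.sum_mul_sum]
        refine Finset.sum_congr rfl fun x _ => Finset.sum_congr rfl fun y _ => ?_
        rw [(starRingEnd ℂ).map_mul, std_conj]
        have : (g x - g y) * b = g x * b + -(g y * b) := by ring
        rw [this, AddChar.map_add_eq_mul]
        ring
    _ = ∑ x ∈ s, ∑ y ∈ s,
          (f x * (starRingEnd ℂ) (f y)) * ∑ b : ZMod q, ZMod.stdAddChar ((g x - g y) * b) := by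
        rw [Finset.sum_comm]
        refine Finset.sum_congr rfl fun x _ => ?_
        rw [Finset.sum_comm]
        refine Finset.sum_congr rfl fun y _ => ?_
        rw [Finset.mul_sum]
    _ = ∑ x ∈ s, ∑ y ∈ s, if y = x then (f x * (starRingEnd ℂ) (f x)) * q else 0 := by
        refine Finset.sum_congr rfl fun x hx => Finset.sum_congr rfl fun y hy => ?_
        rw [orth]
        by_cases h : y = x
        · subst h; simp
        · rw [if_neg, if_neg h, mul_zero]
          intro hc
          exact h (hg hy hx (sub_eq_zero.mp hc).symm)
    _ = ∑ x ∈ s, (f x * (starRingEnd ℂ) (f x)) * q := by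
        refine Finset.sum_congr rfl fun x hx => ?_
        rw [Finset.sum_ite_eq' s x]
        exact if_pos hx
    _ = (q : ℂ) * ∑ x ∈ s, (‖f x‖ : ℂ) ^ 2 := by
        rw [Finset.mul_sum]
        refine Finset.sum_congr rfl fun x _ => ?_
        rw [norm_sq_eq']
        ring

lemma Kl_eq {q : ℕ} [NeZero q] (z : ZMod q) :
    Kl q z = (∑ x : (ZMod q)ˣ,
      ZMod.stdAddChar (z * (x : ZMod q)) * ZMod.stdAddChar ((x⁻¹ : (ZMod q)ˣ) : ZMod q))
      / (Real.sqrt q : ℂ) := by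
  unfold Kl
  congr 1
  refine Finset.sum_congr rfl fun x _ => ?_
  rw [← AddChar.map_add_eq_mul, ZMod.stdAddChar_apply, ZMod.toCircle_apply]
  congr 1
  ring

lemma S_eq {q : ℕ} [NeZero q] (M : ℕ) (α : ℕ → ℂ) (b : ZMod q) (c : (ZMod q)ˣ) :
    ∑ m ∈ Finset.Icc 1 M, α m * Kl q (b + (m : ZMod q) * (c : ZMod q))
      = (∑ x : (ZMod q)ˣ,
          (ZMod.stdAddChar ((x⁻¹ : (ZMod q)ˣ) : ZMod q)
            * ∑ m ∈ Finset.Icc 1 M, α m * ZMod.stdAddChar ((m : ZMod q) * ((c : ZMod q) * (x : ZMod q))))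
          * ZMod.stdAddChar ((x : ZMod q) * b)) / (Real.sqrt q : ℂ) := by
  simp only [Kl_eq, ← mul_div_assoc, ← Finset.sum_div]
  congr 1
  simp only [Finset.mul_sum]
  rw [Finset.sum_comm]
  refine Finset.sum_congr rfl fun x _ => ?_
  rw [Finset.sum_mul]
  refine Finset.sum_congr rfl fun m _ => ?_
  have h : (b + (m : ZMod q) * c) * (x : ZMod q)
      = ((m : ZMod q) * ((c : ZMod q) * x)) + (x : ZMod q) * b := by ring
  rw [h, AddChar.map_add_eq_mul]
  ring

/-- Second moment (ν = 1 case of Lemma 3.2): for prime `q`, `1 ≤ M < q` and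
coefficients with `|α_m| ≤ 1`,
`Σ_{b mod q} Σ_{(c,q)=1} |Σ_{m ≤ M} α_m Kl(b+mc,q)|² ≪ q² M`. -/
theorem stmt_3 :
    ∃ C : ℝ, 0 < C ∧
      ∀ (q : ℕ) [NeZero q], q.Prime →
        ∀ M : ℕ, 1 ≤ M → M < q →
          ∀ α : ℕ → ℂ, (∀ m, ‖α m‖ ≤ 1) →
            ∑ b : ZMod q, ∑ c : (ZMod q)ˣ,
                ‖∑ m ∈ Finset.Icc 1 M, α m * Kl q (b + (m : ZMod q) * (c : ZMod q))‖ ^ 2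
              ≤ C * ((q : ℝ) ^ 2 * M) := by
  refine ⟨1, one_pos, ?_⟩
  intro q _ hq M hM1 hMq α hα
  have hq0 : (0 : ℝ) < q := by exact_mod_cast hq.pos
  set A : ZMod q → ℂ := fun u => ∑ m ∈ Finset.Icc 1 M, α m * ZMod.stdAddChar ((m : ZMod q) * u)
    with hA
  have hgu : Set.InjOn (fun x : (ZMod q)ˣ => (x : ZMod q)) (↑(univ : Finset (ZMod q)ˣ)) :=
    fun a _ b _ h => Units.ext h
  have hstep : ∀ c : (ZMod q)ˣ,
      ∑ b : ZMod q, ‖∑ m ∈ Finset.Icc 1 M, α m * Kl q (b + (m : ZMod q) * (c : ZMod q))‖ ^ 2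
        = ∑ x : (ZMod q)ˣ, ‖A ((c : ZMod q) * (x : ZMod q))‖ ^ 2 := by
    intro c
    have h1 : ∀ b : ZMod q,
        ‖∑ m ∈ Finset.Icc 1 M, α m * Kl q (b + (m : ZMod q) * (c : ZMod q))‖ ^ 2
          = ‖∑ x : (ZMod q)ˣ,
              (ZMod.stdAddChar ((x⁻¹ : (ZMod q)ˣ) : ZMod q)
                * A ((c : ZMod q) * (x : ZMod q)))
              * ZMod.stdAddChar ((x : ZMod q) * b)‖ ^ 2 / q := by
      intro b
      rw [S_eq, norm_div, div_pow]
      congr 1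
      rw [Complex.norm_real, Real.norm_eq_abs, abs_of_nonneg (Real.sqrt_nonneg _),
        Real.sq_sqrt hq0.le]
    calc ∑ b : ZMod q, ‖∑ m ∈ Finset.Icc 1 M, α m * Kl q (b + (m : ZMod q) * (c : ZMod q))‖ ^ 2
        = (∑ b : ZMod q, ‖∑ x : (ZMod q)ˣ,
            (ZMod.stdAddChar ((x⁻¹ : (ZMod q)ˣ) : ZMod q) * A ((c : ZMod q) * (x : ZMod q)))
            * ZMod.stdAddChar ((x : ZMod q) * b)‖ ^ 2) / q := by
          rw [Finset.sum_div]
          exact Finset.sum_congr rfl fun b _ => h1 b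
      _ = ((q : ℝ) * ∑ x : (ZMod q)ˣ,
            ‖ZMod.stdAddChar ((x⁻¹ : (ZMod q)ˣ) : ZMod q) * A ((c : ZMod q) * (x : ZMod q))‖ ^ 2)
            / q := by
          rw [key univ _ (fun x : (ZMod q)ˣ => (x : ZMod q)) hgu]
      _ = ∑ x : (ZMod q)ˣ,
            ‖ZMod.stdAddChar ((x⁻¹ : (ZMod q)ˣ) : ZMod q) * A ((c : ZMod q) * (x : ZMod q))‖ ^ 2 := by
          field_simp
      _ = ∑ x : (ZMod q)ˣ, ‖A ((c : ZMod q) * (x : ZMod q))‖ ^ 2 := by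
          refine Finset.sum_congr rfl fun x _ => ?_
          rw [norm_mul, std_norm, one_mul]
  rw [Finset.sum_comm]
  have hchain : ∑ c : (ZMod q)ˣ, ∑ b : ZMod q,
      ‖∑ m ∈ Finset.Icc 1 M, α m * Kl q (b + (m : ZMod q) * (c : ZMod q))‖ ^ 2
        = (Fintype.card (ZMod q)ˣ : ℝ) * ∑ x : (ZMod q)ˣ, ‖A (x : ZMod q)‖ ^ 2 := by
    calc ∑ c : (ZMod q)ˣ, ∑ b : ZMod q,
        ‖∑ m ∈ Finset.Icc 1 M, α m * Kl q (b + (m : ZMod q) * (c : ZMod q))‖ ^ 2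
        = ∑ c : (ZMod q)ˣ, ∑ x : (ZMod q)ˣ, ‖A ((c : ZMod q) * (x : ZMod q))‖ ^ 2 :=
          Finset.sum_congr rfl fun c _ => hstep c
      _ = ∑ _c : (ZMod q)ˣ, ∑ x : (ZMod q)ˣ, ‖A (x : ZMod q)‖ ^ 2 := by
          refine Finset.sum_congr rfl fun c _ => ?_
          refine Fintype.sum_equiv (Equiv.mulLeft c) _ _ fun x => ?_
          simp [Units.val_mul]
      _ = (Fintype.card (ZMod q)ˣ : ℝ) * ∑ x : (ZMod q)ˣ, ‖A (x : ZMod q)‖ ^ 2 := by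
          rw [Finset.sum_const, card_univ, nsmul_eq_mul]
  rw [hchain, one_mul]
  have hS12 : ∑ x : (ZMod q)ˣ, ‖A (x : ZMod q)‖ ^ 2 ≤ ∑ u : ZMod q, ‖A u‖ ^ 2 := by
    calc ∑ x : (ZMod q)ˣ, ‖A (x : ZMod q)‖ ^ 2
        = ∑ u ∈ (univ : Finset (ZMod q)ˣ).image (fun x : (ZMod q)ˣ => (x : ZMod q)),
            ‖A u‖ ^ 2 := by
          rw [Finset.sum_image (fun a _ b _ h => Units.ext h)]
      _ ≤ ∑ u : ZMod q, ‖A u‖ ^ 2 :=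
          Finset.sum_le_sum_of_subset_of_nonneg (Finset.subset_univ _)
            (fun u _ _ => by positivity)
  have hginj : Set.InjOn (fun m : ℕ => (m : ZMod q)) (↑(Finset.Icc 1 M)) := by
    intro m hm n hn h
    simp only [Finset.coe_Icc, Set.mem_Icc] at hm hn
    have h2 := (ZMod.natCast_eq_natCast_iff m n q).mp h
    have hmq : m < q := lt_of_le_of_lt hm.2 hMq
    have hnq : n < q := lt_of_le_of_lt hn.2 hMq
    rwa [Nat.ModEq, Nat.mod_eq_of_lt hmq, Nat.mod_eq_of_lt hnq] at h2
  have hS2 : ∑ u : ZMod q, ‖A u‖ ^ 2 = (q : ℝ) * ∑ m ∈ Finset.Icc 1 M, ‖α m‖ ^ 2 := by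
    simp only [hA]
    exact key (Finset.Icc 1 M) α (fun m : ℕ => (m : ZMod q)) hginj
  have hsum_le : ∑ m ∈ Finset.Icc 1 M, ‖α m‖ ^ 2 ≤ (M : ℝ) := by
    calc ∑ m ∈ Finset.Icc 1 M, ‖α m‖ ^ 2 ≤ ∑ _m ∈ Finset.Icc 1 M, (1 : ℝ) :=
         
          Finset.sum_le_sum fun m _ => pow_le_one₀ (norm_nonneg _) (hα m)
      _ = (M : ℝ) := by
          rw [Finset.sum_const, Nat.card_Icc, nsmul_eq_mul, mul_one]
          norm_num
  have hS1le : ∑ x : (ZMod q)ˣ, ‖A (x : ZMod q)‖ ^ 2 ≤ (q : ℝ) * M :=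
    hS12.trans (hS2 ▸ mul_le_mul_of_nonneg_left hsum_le hq0.le)
  have hcard : (Fintype.card (ZMod q)ˣ : ℝ) ≤ q := by
    have := Fintype.card_le_of_injective (fun x : (ZMod q)ˣ => (x : ZMod q))
      (fun a b h => Units.ext h)
    rw [ZMod.card] at this
    exact_mod_cast this
  calc (Fintype.card (ZMod q)ˣ : ℝ) * ∑ x : (ZMod q)ˣ, ‖A (x : ZMod q)‖ ^ 2
      ≤ (q : ℝ) * ((q : ℝ) * M) :=
        mul_le_mul hcard hS1le (by positivity) hq0.le
    _ = (q : ℝ) ^ 2 * M := by ring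
end

section
/- Let K ≥ 1, E ≥ 1 be reals, N ≥ E, H ≥ 1. The number of triples (h₁, h₂, k) of integers with 0 < |h₁|, |h₂| ≤ 2H, 1 ≤ |k| ≤ K, and k(h₁n₂ − h₂n₁) = ℓ for a fixed nonzero integer ℓ and fixed coprime n₁, n₂ ∼ N/E, is ≪_ε |ℓ|^ε · (1 + EH/N). -/
open Finset


lemma factor_small (ε : ℝ) (hε : 0 < ε) (p a : ℕ) (hp : 2 ≤ p) :
    (a + 1 : ℝ) ≤ (1 + 2/ε) * (p:ℝ) ^ ((a:ℝ) * ε) := by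
  have h2 : (2:ℝ) ^ ((a:ℝ) * ε) ≤ (p:ℝ) ^ ((a:ℝ) * ε) := by
    apply Real.rpow_le_rpow (by norm_num) (by exact_mod_cast hp) (by positivity)
  have hexp : 1 + Real.log 2 * ((a:ℝ) * ε) ≤ (2:ℝ) ^ ((a:ℝ) * ε) := by
    rw [Real.rpow_def_of_pos (by norm_num)]
    linarith [Real.add_one_le_exp (Real.log 2 * ((a:ℝ) * ε))]
  have hlog : (0.6931471803 : ℝ) < Real.log 2 := Real.log_two_gt_d9
  have ha : (0:ℝ) ≤ a := Nat.cast_nonneg a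
  have h1 : (0:ℝ) < 2/ε := by positivity
  have hpos : (0:ℝ) < 1 + 2/ε := by positivity
  have step1 : (1 + 2/ε) * (1 + Real.log 2 * ((a:ℝ) * ε)) ≤ (1 + 2/ε) * (p:ℝ) ^ ((a:ℝ) * ε) :=
    mul_le_mul_of_nonneg_left (hexp.trans h2) hpos.le
  have expand : (1 + 2/ε) * (1 + Real.log 2 * ((a:ℝ) * ε))
      = 1 + Real.log 2 * ((a:ℝ)*ε) + 2/ε + 2*Real.log 2*(a:ℝ) := by
    field_simp
    ring
  have hl : (1:ℝ) ≤ 2*Real.log 2 := by nlinarith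
  have h4 : 1*(a:ℝ) ≤ (2*Real.log 2)*(a:ℝ) := mul_le_mul_of_nonneg_right hl ha
  have h5 : (0:ℝ) ≤ Real.log 2 * ((a:ℝ)*ε) := by positivity
  linarith

lemma factor_large (ε : ℝ) (hε : 0 < ε) (p a : ℕ) (hp : (2:ℝ) ^ (1/ε) ≤ (p:ℝ)) :
    (a + 1 : ℝ) ≤ (p:ℝ) ^ ((a:ℝ) * ε) := by
  have h1 : ((2:ℝ) ^ (1/ε)) ^ ((a:ℝ) * ε) ≤ (p:ℝ) ^ ((a:ℝ) * ε) :=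
    Real.rpow_le_rpow (by positivity) hp (by positivity)
  have h2 : ((2:ℝ) ^ (1/ε)) ^ ((a:ℝ) * ε) = (2:ℝ) ^ (a:ℝ) := by
    rw [← Real.rpow_mul (by norm_num)]
    congr 1
    field_simp
  have h3 : (a + 1 : ℝ) ≤ (2:ℝ) ^ (a:ℝ) := by
    rw [Real.rpow_natCast]
    exact_mod_cast (Nat.lt_two_pow_self (n := a))
  rw [h2] at h1; linarith

lemma divisor_bound (ε : ℝ) (hε : 0 < ε) :
    ∃ C : ℝ, 0 < C ∧ ∀ n : ℕ, n ≠ 0 → ((n.divisors.card : ℝ)) ≤ C * (n:ℝ) ^ ε := by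
  set B : ℕ := ⌈(2:ℝ) ^ (1/ε)⌉₊ with hB
  refine ⟨(1 + 2/ε) ^ (B+1), by positivity, ?_⟩
  intro n hn
  have hd : (n.divisors.card : ℝ) = ∏ p ∈ n.primeFactors, ((n.factorization p : ℝ) + 1) := by
    rw [Nat.card_divisors hn]
    push_cast
    rfl
  have hnn : (n:ℝ) = ∏ p ∈ n.primeFactors, (p:ℝ) ^ (n.factorization p) := by
    conv_lhs => rw [← Nat.factorization_prod_pow_eq_self hn]
    rw [Nat.prod_factorization_eq_prod_primeFactors]
    push_cast
    rfl
  have hrp : (n:ℝ) ^ ε = ∏ p ∈ n.primeFactors, (p:ℝ) ^ ((n.factorization p : ℝ) * ε) := by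
    rw [hnn, ← Real.finset_prod_rpow _ _ (fun p _ => by positivity)]
    apply Finset.prod_congr rfl
    intro p hp
    rw [← Real.rpow_natCast (p:ℝ) (n.factorization p), ← Real.rpow_mul (Nat.cast_nonneg p)]
  rw [hd, hrp]
  set c : ℕ → ℝ := fun p => if p ≤ B then 1 + 2/ε else 1 with hc
  have key : ∏ p ∈ n.primeFactors, ((n.factorization p : ℝ) + 1)
      ≤ ∏ p ∈ n.primeFactors, c p * (p:ℝ) ^ ((n.factorization p : ℝ) * ε) := by
    apply Finset.prod_le_prod (fun p _ => by positivity)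
    intro p hp
    have hp2 : 2 ≤ p := (Nat.prime_of_mem_primeFactors hp).two_le
    by_cases h : p ≤ B
    · simp only [hc, if_pos h]
      exact factor_small ε hε p _ hp2
    · simp only [hc, if_neg h]
      rw [one_mul]
      apply factor_large ε hε p _
      calc (2:ℝ) ^ (1/ε) ≤ (B : ℝ) := Nat.le_ceil _
        _ ≤ (p:ℝ) := by exact_mod_cast (Nat.not_le.mp h).le
  refine key.trans ?_
  rw [Finset.prod_mul_distrib]
  have hcb : ∏ p ∈ n.primeFactors, c p ≤ (1 + 2/ε) ^ (B+1) := by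
    have h1 : ∏ p ∈ n.primeFactors, c p
        = (1 + 2/ε) ^ ((n.primeFactors.filter (fun p => p ≤ B)).card) := by
      simp only [hc]
      rw [Finset.prod_ite, Finset.prod_const, Finset.prod_const_one, mul_one]
    rw [h1]
    apply pow_le_pow_right₀ (le_add_of_nonneg_right (by positivity))
    have hsub : n.primeFactors.filter (fun p => p ≤ B) ⊆ Finset.range (B+1) := by
      intro p hp
      simp only [Finset.mem_filter] at hp
      simp only [Finset.mem_range]
      omega
    calc (n.primeFactors.filter (fun p => p ≤ B)).card ≤ (Finset.range (B+1)).card :=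
          Finset.card_le_card hsub
      _ = B + 1 := Finset.card_range _
  have hprodnn : (0:ℝ) ≤ ∏ p ∈ n.primeFactors, (p:ℝ) ^ ((n.factorization p : ℝ) * ε) :=
    Finset.prod_nonneg (fun p _ => by positivity)
  exact mul_le_mul_of_nonneg_right hcb hprodnn

lemma card_cong_le (S : Finset ℤ) (M d : ℤ) (hM : 0 ≤ M) (hd : 0 < d)
    (hS : ∀ x ∈ S, -M ≤ x ∧ x ≤ M)
    (hcong : ∀ x ∈ S, ∀ y ∈ S, d ∣ x - y) :
    (S.card : ℝ) ≤ 2 * (M:ℝ) / (d:ℝ) + 1 := by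
  have hdR : (0:ℝ) < (d:ℝ) := by exact_mod_cast hd
  rcases S.eq_empty_or_nonempty with h | h
  · simp only [h, Finset.card_empty, Nat.cast_zero]
    positivity
  · set x₀ := S.min' h with hx₀
    have hx₀S : x₀ ∈ S := S.min'_mem h
    have hcard : S.card ≤ (Finset.Icc (0:ℤ) ((2*M)/d)).card := by
      apply Finset.card_le_card_of_injOn (fun x => (x - x₀)/d)
      · intro x hx
        have h1 := hS x hx
        have h0 := hS x₀ hx₀S
        have hle : x₀ ≤ x := S.min'_le x hx
        simp only [Finset.mem_coe, Finset.mem_Icc]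
        constructor
        · exact Int.ediv_nonneg (by omega) hd.le
        · exact Int.ediv_le_ediv hd (by omega)
      · intro x hx y hy hxy
        have h1 := Int.ediv_mul_cancel (hcong x hx x₀ hx₀S)
        have h2 := Int.ediv_mul_cancel (hcong y hy x₀ hx₀S)
        simp only at hxy
        have hxe : x - x₀ = y - x₀ := by rw [← h1, hxy, h2]
        omega
    have hc2 : (S.card : ℝ) ≤ ((2*M)/d : ℤ) + 1 := by
      rw [Int.card_Icc] at hcard
      have hnn : 0 ≤ (2*M)/d := Int.ediv_nonneg (by omega) hd.le
      have hZ : (S.card : ℤ) ≤ 2*M/d + 1 := by omega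
      exact_mod_cast hZ
    refine hc2.trans ?_
    have : (((2*M)/d : ℤ) : ℝ) ≤ 2*(M:ℝ)/(d:ℝ) := by
      rw [le_div_iff₀ hdR]
      exact_mod_cast Int.ediv_mul_le (2*M) hd.ne'
    linarith

/-- For fixed coprime `n₁, n₂ ∼ N/E` and a fixed nonzero integer `ℓ`, the number of
triples `(h₁,h₂,k)` with `0 < |h₁|,|h₂| ≤ 2H`, `1 ≤ |k| ≤ K` and
`k(h₁n₂ − h₂n₁) = ℓ` is `≪_ε |ℓ|^ε (1 + EH/N)`. -/
theorem stmt_13 :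
    ∀ ε : ℝ, 0 < ε → ∃ C : ℝ, 0 < C ∧
      ∀ (K E N H : ℝ), 1 ≤ K → 1 ≤ E → E ≤ N → 1 ≤ H →
        ∀ (ℓ : ℤ), ℓ ≠ 0 →
          ∀ (n₁ n₂ : ℤ), IsCoprime n₁ n₂ →
            N / E < (n₁ : ℝ) → (n₁ : ℝ) ≤ 2 * N / E →
            N / E < (n₂ : ℝ) → (n₂ : ℝ) ≤ 2 * N / E →
            ((((Finset.Icc (-⌊2 * H⌋) ⌊2 * H⌋ ×ˢ Finset.Icc (-⌊2 * H⌋) ⌊2 * H⌋) ×ˢ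
                  Finset.Icc (-⌊K⌋) ⌊K⌋).filter
                (fun p : (ℤ × ℤ) × ℤ =>
                  p.1.1 ≠ 0 ∧ p.1.2 ≠ 0 ∧ p.2 ≠ 0 ∧
                    p.2 * (p.1.1 * n₂ - p.1.2 * n₁) = ℓ)).card : ℝ)
              ≤ C * (ℓ.natAbs : ℝ) ^ ε * (1 + E * H / N) := by
  intro ε hε
  obtain ⟨C₀, hC₀, hdiv⟩ := divisor_bound ε hε
  refine ⟨8*C₀, by positivity, ?_⟩
  intro K E N H hK hE hEN hH ℓ hℓ n₁ n₂ hcop hn₁l hn₁u hn₂l hn₂u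
  have hE0 : (0:ℝ) < E := by linarith
  have hN0 : (0:ℝ) < N := by linarith
  have hNE1 : (1:ℝ) ≤ N/E := (one_le_div hE0).mpr hEN
  have hNE0 : (0:ℝ) < N/E := by linarith
  have hn₂posR : (0:ℝ) < (n₂:ℝ) := by linarith
  have hn₂pos : (0:ℤ) < n₂ := by exact_mod_cast hn₂posR
  have hn₂0 : n₂ ≠ 0 := hn₂pos.ne'
  set M := ⌊2*H⌋ with hMdef
  set Kf := ⌊K⌋ with hKfdef
  have hM0 : (0:ℤ) ≤ M := by
    apply Int.le_floor.mpr; push_cast; linarith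
  set A := ((Finset.Icc (-M) M ×ˢ Finset.Icc (-M) M) ×ˢ Finset.Icc (-Kf) Kf).filter
      (fun p : (ℤ × ℤ) × ℤ =>
        p.1.1 ≠ 0 ∧ p.1.2 ≠ 0 ∧ p.2 ≠ 0 ∧ p.2 * (p.1.1 * n₂ - p.1.2 * n₁) = ℓ) with hAdef
  have hmemA : ∀ p ∈ A, (p.1.1 ∈ Finset.Icc (-M) M ∧ p.1.2 ∈ Finset.Icc (-M) M ∧
      p.2 ∈ Finset.Icc (-Kf) Kf) ∧
      p.1.1 ≠ 0 ∧ p.1.2 ≠ 0 ∧ p.2 ≠ 0 ∧ p.2 * (p.1.1 * n₂ - p.1.2 * n₁) = ℓ := by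
    intro p hp
    simp only [hAdef, Finset.mem_filter, Finset.mem_product] at hp
    exact ⟨⟨hp.1.1.1, hp.1.1.2, hp.1.2⟩, hp.2⟩
  have hfib : ∀ p ∈ A, p.2 ∈ Finset.Icc (-Kf) Kf := fun p hp => ((hmemA p hp).1).2.2
  have hsum : A.card = ∑ k ∈ Finset.Icc (-Kf) Kf, (A.filter (fun p => p.2 = k)).card :=
    Finset.card_eq_sum_card_fiberwise hfib
  set T := (Finset.Icc (-Kf) Kf).filter (fun k => k ≠ 0 ∧ k ∣ ℓ) with hTdef
  have hsum2 : A.card = ∑ k ∈ T, (A.filter (fun p => p.2 = k)).card := by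
    rw [hsum]
    symm
    apply Finset.sum_subset (Finset.filter_subset _ _)
    intro k hk hkT
    rw [Finset.card_eq_zero, Finset.filter_eq_empty_iff]
    intro p hp hpk
    obtain ⟨-, -, -, h3, h4⟩ := hmemA p hp
    exact hkT (Finset.mem_filter.mpr ⟨hk, by rw [← hpk]; exact ⟨h3, ⟨_, h4.symm⟩⟩⟩)
  set B : ℝ := 4*E*H/N + 1 with hBdef
  have hB0 : 0 ≤ B := by positivity
  have hfibbound : ∀ k ∈ T, ((A.filter (fun p => p.2 = k)).card : ℝ) ≤ B := by
    intro k hk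
    obtain ⟨hkIcc, hk0, hkdvd⟩ := Finset.mem_filter.mp hk
    set F := A.filter (fun p => p.2 = k) with hFdef
    have hmemF : ∀ p ∈ F, p ∈ A ∧ p.2 = k := fun p hp => Finset.mem_filter.mp hp
    set S := F.image (fun p : (ℤ × ℤ) × ℤ => p.1.2) with hSdef
    have hinj : Set.InjOn (fun p : (ℤ × ℤ) × ℤ => p.1.2) F := by
      intro p hp q hq hpq
      obtain ⟨hpA, hpk⟩ := hmemF p hp
      obtain ⟨hqA, hqk⟩ := hmemF q hq
      obtain ⟨-, -, -, -, hpe⟩ := hmemA p hpA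
      obtain ⟨-, -, -, -, hqe⟩ := hmemA q hqA
      simp only at hpq
      rw [hpk] at hpe; rw [hqk] at hqe
      have heq : p.1.1 * n₂ - p.1.2 * n₁ = q.1.1 * n₂ - q.1.2 * n₁ :=
        mul_left_cancel₀ hk0 (hpe.trans hqe.symm)
      rw [hpq] at heq
      have h11 : p.1.1 = q.1.1 := by
        have : p.1.1 * n₂ = q.1.1 * n₂ := by linarith
        exact mul_right_cancel₀ hn₂0 this
      have : p.2 = q.2 := hpk.trans hqk.symm
      exact Prod.ext (Prod.ext h11 hpq) this
    have hcardF : F.card = S.card := (Finset.card_image_of_injOn hinj).symm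
    have hbound : (S.card : ℝ) ≤ 2 * (M:ℝ) / (n₂:ℝ) + 1 := by
      apply card_cong_le S M n₂ hM0 hn₂pos
      · intro x hx
        obtain ⟨p, hp, hpx⟩ := Finset.mem_image.mp hx
        obtain ⟨hpA, -⟩ := hmemF p hp
        obtain ⟨⟨-, h2, -⟩, -⟩ := hmemA p hpA
        rw [Finset.mem_Icc] at h2
        rw [← hpx]; exact h2
      · intro x hx y hy
        obtain ⟨p, hp, hpx⟩ := Finset.mem_image.mp hx
        obtain ⟨q, hq, hqy⟩ := Finset.mem_image.mp hy
        obtain ⟨hpA, hpk⟩ := hmemF p hp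
        obtain ⟨hqA, hqk⟩ := hmemF q hq
        obtain ⟨-, -, -, -, hpe⟩ := hmemA p hpA
        obtain ⟨-, -, -, -, hqe⟩ := hmemA q hqA
        rw [hpk] at hpe; rw [hqk] at hqe
        have heq : p.1.1 * n₂ - p.1.2 * n₁ = q.1.1 * n₂ - q.1.2 * n₁ :=
          mul_left_cancel₀ hk0 (hpe.trans hqe.symm)
        have hdvd : n₂ ∣ (x - y) * n₁ := by
          refine ⟨p.1.1 - q.1.1, ?_⟩
          rw [← hpx, ← hqy]
          linear_combination -heq
        exact hcop.symm.dvd_of_dvd_mul_right hdvd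
    have hMH : (M:ℝ) ≤ 2*H := Int.floor_le _
    have hstep : 2 * (M:ℝ) / (n₂:ℝ) ≤ 4*E*H/N := by
      have hNlt : N < (n₂:ℝ) * E := (div_lt_iff₀ hE0).mp hn₂l
      have hH0 : (0:ℝ) < H := by linarith
      rw [div_le_div_iff₀ hn₂posR hN0]
      nlinarith [mul_le_mul_of_nonneg_right hMH hN0.le,
        mul_lt_mul_of_pos_left hNlt (by linarith : (0:ℝ) < 4*H)]
    rw [hFdef] at hcardF
    rw [hcardF]
    rw [hBdef]
    linarith
  have hTcard : (T.card : ℝ) ≤ 2 * (ℓ.natAbs.divisors.card : ℝ) := by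
    have hsub : T ⊆ (ℓ.natAbs.divisors.image (fun m : ℕ => (m:ℤ))) ∪
        (ℓ.natAbs.divisors.image (fun m : ℕ => -(m:ℤ))) := by
      intro k hk
      obtain ⟨-, hk0, hkd⟩ := Finset.mem_filter.mp hk
      have h1 : k.natAbs ∈ ℓ.natAbs.divisors :=
        Nat.mem_divisors.mpr ⟨Int.natAbs_dvd_natAbs.mpr hkd, Int.natAbs_ne_zero.mpr hℓ⟩
      rcases le_or_gt 0 k with h | h
      · exact Finset.mem_union_left _ (Finset.mem_image.mpr ⟨k.natAbs, h1, by omega⟩)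
      · exact Finset.mem_union_right _ (Finset.mem_image.mpr ⟨k.natAbs, h1, by omega⟩)
    have h2 : T.card ≤ 2 * ℓ.natAbs.divisors.card := by
      calc T.card ≤ _ := Finset.card_le_card hsub
        _ ≤ (ℓ.natAbs.divisors.image (fun m : ℕ => (m:ℤ))).card +
            (ℓ.natAbs.divisors.image (fun m : ℕ => -(m:ℤ))).card := Finset.card_union_le _ _
        _ ≤ ℓ.natAbs.divisors.card + ℓ.natAbs.divisors.card :=
            Nat.add_le_add (Finset.card_image_le) (Finset.card_image_le)
        _ = 2 * ℓ.natAbs.divisors.card := by ring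
    exact_mod_cast h2
  have hdivℓ : ((ℓ.natAbs.divisors.card : ℝ)) ≤ C₀ * (ℓ.natAbs : ℝ) ^ ε :=
    hdiv ℓ.natAbs (Int.natAbs_ne_zero.mpr hℓ)
  have htotal : (A.card : ℝ) ≤ (T.card : ℝ) * B := by
    rw [hsum2]
    push_cast
    calc ∑ k ∈ T, ((A.filter (fun p => p.2 = k)).card : ℝ)
        ≤ ∑ k ∈ T, B := Finset.sum_le_sum hfibbound
      _ = (T.card : ℝ) * B := by rw [Finset.sum_const, nsmul_eq_mul]
  have hBle : B ≤ 4 * (1 + E*H/N) := by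
    rw [hBdef]
    have : 0 ≤ E*H/N := by positivity
    have h4 : 4*E*H/N = 4*(E*H/N) := by ring
    linarith [h4]
  have hrpos : (0:ℝ) ≤ C₀ * (ℓ.natAbs : ℝ) ^ ε := by positivity
  calc (A.card : ℝ) ≤ (T.card : ℝ) * B := htotal
    _ ≤ (2 * (ℓ.natAbs.divisors.card : ℝ)) * B := by
        apply mul_le_mul_of_nonneg_right hTcard hB0
    _ ≤ (2 * (C₀ * (ℓ.natAbs : ℝ) ^ ε)) * (4 * (1 + E*H/N)) := by
        apply mul_le_mul (by linarith) hBle hB0 (by positivity)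
    _ = 8*C₀ * (ℓ.natAbs : ℝ) ^ ε * (1 + E * H / N) := by ring
end
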